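/- Let Q ∈ ℝ^{n×n} be symmetric positive definite and a ∈ ℝ^n, and set κ = aᵀQ⁻¹a. Then the set T = {(x, z, t) ∈ ℝ^n × [0,1] × ℝ : t ≥ xᵀQx + (1 − z)(aᵀx)²/(1 + z·κ)} is a convex subset of ℝ^n × ℝ × ℝ. -/

import Mathlib

open Matrix

private lemma persp_ineq (S1 S2 d1 d2 l m : ℝ) (hd1 : 0 < d1) (hd2 : 0 < d2)
    (hl : 0 ≤ l) (hm : 0 ≤ m) (hld : 0 < l * d1 + m * d2) :
    (l * S1 + m * S2) ^ 2 / (l * d1 + m * d2) ≤ l * (S1 ^ 2 / d1) + m * (S2 ^ 2 / d2) := by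
  have hco : l * (S1 ^ 2 / d1) + m * (S2 ^ 2 / d2)
      = (l * S1 ^ 2 * d2 + m * S2 ^ 2 * d1) / (d1 * d2) := by
    field_simp
  rw [hco, div_le_div_iff₀ hld (by positivity)]
  nlinarith [mul_nonneg (mul_nonneg hl hm) (sq_nonneg (S1 * d2 - S2 * d1))]

private lemma scalar_key (Q1 Q2 B S1 S2 z1 z2 κ l m : ℝ)
    (hκ0 : 0 ≤ κ) (hl : 0 ≤ l) (hm : 0 ≤ m) (hs : l + m = 1)
    (hz10 : 0 ≤ z1) (hz11 : z1 ≤ 1) (hz20 : 0 ≤ z2) (hz21 : z2 ≤ 1)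
    (hD : 0 ≤ Q1 - 2 * B + Q2)
    (hCS : (S1 - S2) ^ 2 ≤ κ * (Q1 - 2 * B + Q2)) :
    l ^ 2 * Q1 + 2 * (l * m) * B + m ^ 2 * Q2 +
      (1 - (l * z1 + m * z2)) * (l * S1 + m * S2) ^ 2 / (1 + (l * z1 + m * z2) * κ)
    ≤ l * (Q1 + (1 - z1) * S1 ^ 2 / (1 + z1 * κ)) +
      m * (Q2 + (1 - z2) * S2 ^ 2 / (1 + z2 * κ)) := by
  obtain rfl : m = 1 - l := by linarith
  have hd1 : 0 < 1 + z1 * κ := by nlinarith [mul_nonneg hz10 hκ0]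
  have hd2 : 0 < 1 + z2 * κ := by nlinarith [mul_nonneg hz20 hκ0]
  have hdbar : 0 < 1 + (l * z1 + (1 - l) * z2) * κ := by
    nlinarith [mul_nonneg (add_nonneg (mul_nonneg hl hz10) (mul_nonneg hm hz20)) hκ0]
  rcases eq_or_lt_of_le hκ0 with hκ | hκ
  · have hS : S1 = S2 := by nlinarith [sq_nonneg (S1 - S2)]
    rw [← hκ] at *
    have h1 : (1 : ℝ) + z1 * 0 = 1 := by ring
    have h2 : (1 : ℝ) + z2 * 0 = 1 := by ring
    have h3 : (1 : ℝ) + (l * z1 + (1 - l) * z2) * 0 = 1 := by ring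
    rw [h1, h2, h3, div_one, div_one, div_one, hS]
    nlinarith [mul_nonneg (mul_nonneg hl hm) hD]
  · have hdbar_eq : 1 + (l * z1 + (1 - l) * z2) * κ
        = l * (1 + z1 * κ) + (1 - l) * (1 + z2 * κ) := by ring
    have hpersp : (l * S1 + (1 - l) * S2) ^ 2 / (1 + (l * z1 + (1 - l) * z2) * κ)
        ≤ l * (S1 ^ 2 / (1 + z1 * κ)) + (1 - l) * (S2 ^ 2 / (1 + z2 * κ)) := by
      rw [hdbar_eq]
      exact persp_ineq _ _ _ _ _ _ hd1 hd2 hl hm (hdbar_eq ▸ hdbar)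
    have key : ∀ z S : ℝ, 0 < 1 + z * κ →
        (1 - z) * S ^ 2 / (1 + z * κ) = (1 + κ) / κ * (S ^ 2 / (1 + z * κ)) - S ^ 2 / κ := by
      intro z S hd
      field_simp
      ring
    rw [key z1 S1 hd1, key z2 S2 hd2, key (l * z1 + (1 - l) * z2) _ hdbar]
    have hper2 : (1 + κ) / κ * ((l * S1 + (1 - l) * S2) ^ 2 / (1 + (l * z1 + (1 - l) * z2) * κ))
        ≤ (1 + κ) / κ * (l * (S1 ^ 2 / (1 + z1 * κ)) + (1 - l) * (S2 ^ 2 / (1 + z2 * κ))) :=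
      mul_le_mul_of_nonneg_left hpersp (by positivity)
    have hfin : l * (1 - l) * (S1 - S2) ^ 2 / κ ≤ l * (1 - l) * (Q1 - 2 * B + Q2) := by
      rw [div_le_iff₀ hκ]
      nlinarith [mul_le_mul_of_nonneg_left hCS (mul_nonneg hl hm)]
    have hexp : l * (1 - l) * (S1 - S2) ^ 2 / κ
        = l * (S1 ^ 2 / κ) + (1 - l) * (S2 ^ 2 / κ) - (l * S1 + (1 - l) * S2) ^ 2 / κ := by
      field_simp
      ring
    have hq : l * Q1 + (1 - l) * Q2 - (l ^ 2 * Q1 + 2 * (l * (1 - l)) * B + (1 - l) ^ 2 * Q2)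
        = l * (1 - l) * (Q1 - 2 * B + Q2) := by ring
    have e1 : l * (Q1 + ((1 + κ) / κ * (S1 ^ 2 / (1 + z1 * κ)) - S1 ^ 2 / κ))
        = l * Q1 + (1 + κ) / κ * (l * (S1 ^ 2 / (1 + z1 * κ))) - l * (S1 ^ 2 / κ) := by ring
    have e2 : (1 - l) * (Q2 + ((1 + κ) / κ * (S2 ^ 2 / (1 + z2 * κ)) - S2 ^ 2 / κ))
        = (1 - l) * Q2 + (1 + κ) / κ * ((1 - l) * (S2 ^ 2 / (1 + z2 * κ)))
          - (1 - l) * (S2 ^ 2 / κ) := by ring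
    rw [e1, e2]
    have hSb : (l * S1 + (1 - l) * S2) ^ 2 / κ
        = (l * S1 + (1 - l) * S2) ^ 2 / κ := rfl
    linarith [hper2, hfin, hexp.le, hexp.ge, hq.le, hq.ge]

private lemma cs_aux {n : ℕ} {Q : Matrix (Fin n) (Fin n) ℝ} (hQ : Q.PosDef)
    (a x : Fin n → ℝ) :
    (a ⬝ᵥ x) ^ 2 ≤ (a ⬝ᵥ Q⁻¹ *ᵥ a) * (x ⬝ᵥ Q *ᵥ x) := by
  have hT : Qᵀ = Q := by
    simpa [conjTranspose_eq_transpose_of_trivial] using hQ.isHermitian.eq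
  have hsymm : ∀ u v : Fin n → ℝ, u ⬝ᵥ Q *ᵥ v = v ⬝ᵥ Q *ᵥ u := by
    intro u v
    rw [dotProduct_mulVec, ← mulVec_transpose, hT, dotProduct_comm]
  have hy : Q *ᵥ (Q⁻¹ *ᵥ a) = a := by
    rw [mulVec_mulVec, mul_nonsing_inv _ (isUnit_iff_ne_zero.mpr hQ.det_pos.ne'), one_mulVec]
  set y := Q⁻¹ *ᵥ a with hydef
  have h1 : a ⬝ᵥ x = y ⬝ᵥ Q *ᵥ x := by
    rw [← hy, dotProduct_comm, hsymm]
  have h2 : a ⬝ᵥ y = y ⬝ᵥ Q *ᵥ y := by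
    rw [← hy, dotProduct_comm, hsymm]
  rw [h1, h2]
  by_cases hy0 : y = 0
  · simp [hy0]
  · have hqy : 0 < y ⬝ᵥ Q *ᵥ y := by simpa using hQ.dotProduct_mulVec_pos hy0
    have h0 : 0 ≤ ((y ⬝ᵥ Q *ᵥ y) • x - (y ⬝ᵥ Q *ᵥ x) • y) ⬝ᵥ
        Q *ᵥ ((y ⬝ᵥ Q *ᵥ y) • x - (y ⬝ᵥ Q *ᵥ x) • y) := by
      have h := hQ.posSemidef.dotProduct_mulVec_nonneg ((y ⬝ᵥ Q *ᵥ y) • x - (y ⬝ᵥ Q *ᵥ x) • y)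
      simpa only [star_trivial] using h
    have hexp : ((y ⬝ᵥ Q *ᵥ y) • x - (y ⬝ᵥ Q *ᵥ x) • y) ⬝ᵥ
        Q *ᵥ ((y ⬝ᵥ Q *ᵥ y) • x - (y ⬝ᵥ Q *ᵥ x) • y)
        = (y ⬝ᵥ Q *ᵥ y) * ((y ⬝ᵥ Q *ᵥ y) * (x ⬝ᵥ Q *ᵥ x) - (y ⬝ᵥ Q *ᵥ x) ^ 2) := by
      simp only [mulVec_sub, mulVec_smul, dotProduct_sub, sub_dotProduct,
        dotProduct_smul, smul_dotProduct, smul_eq_mul, hsymm x y]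
      ring
    rw [hexp] at h0
    nlinarith [h0, hqy]

private lemma F_comb {n : ℕ} {Q : Matrix (Fin n) (Fin n) ℝ} (hQ : Q.PosDef)
    (a x₁ x₂ : Fin n → ℝ) {z₁ z₂ l m : ℝ}
    (hz10 : 0 ≤ z₁) (hz11 : z₁ ≤ 1) (hz20 : 0 ≤ z₂) (hz21 : z₂ ≤ 1)
    (hl : 0 ≤ l) (hm : 0 ≤ m) (hs : l + m = 1) :
    (l • x₁ + m • x₂) ⬝ᵥ Q *ᵥ (l • x₁ + m • x₂) +
      (1 - (l * z₁ + m * z₂)) * (a ⬝ᵥ (l • x₁ + m • x₂)) ^ 2 /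
        (1 + (l * z₁ + m * z₂) * (a ⬝ᵥ Q⁻¹ *ᵥ a))
    ≤ l * (x₁ ⬝ᵥ Q *ᵥ x₁ + (1 - z₁) * (a ⬝ᵥ x₁) ^ 2 / (1 + z₁ * (a ⬝ᵥ Q⁻¹ *ᵥ a))) +
      m * (x₂ ⬝ᵥ Q *ᵥ x₂ + (1 - z₂) * (a ⬝ᵥ x₂) ^ 2 / (1 + z₂ * (a ⬝ᵥ Q⁻¹ *ᵥ a))) := by
  have hT : Qᵀ = Q := by
    simpa [conjTranspose_eq_transpose_of_trivial] using hQ.isHermitian.eq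
  have hsymm : ∀ u v : Fin n → ℝ, u ⬝ᵥ Q *ᵥ v = v ⬝ᵥ Q *ᵥ u := by
    intro u v
    rw [dotProduct_mulVec, ← mulVec_transpose, hT, dotProduct_comm]
  have hκ0 : 0 ≤ a ⬝ᵥ Q⁻¹ *ᵥ a := by simpa using hQ.inv.posSemidef.dotProduct_mulVec_nonneg a
  have hSbar : a ⬝ᵥ (l • x₁ + m • x₂) = l * (a ⬝ᵥ x₁) + m * (a ⬝ᵥ x₂) := by
    simp [dotProduct_add, dotProduct_smul, smul_eq_mul]
  have hQbar : (l • x₁ + m • x₂) ⬝ᵥ Q *ᵥ (l • x₁ + m • x₂)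
      = l ^ 2 * (x₁ ⬝ᵥ Q *ᵥ x₁) + 2 * (l * m) * (x₁ ⬝ᵥ Q *ᵥ x₂)
        + m ^ 2 * (x₂ ⬝ᵥ Q *ᵥ x₂) := by
    simp only [mulVec_add, mulVec_smul, dotProduct_add, add_dotProduct,
      dotProduct_smul, smul_dotProduct, smul_eq_mul, hsymm x₂ x₁]
    ring
  have hDexp : (x₁ - x₂) ⬝ᵥ Q *ᵥ (x₁ - x₂)
      = x₁ ⬝ᵥ Q *ᵥ x₁ - 2 * (x₁ ⬝ᵥ Q *ᵥ x₂) + x₂ ⬝ᵥ Q *ᵥ x₂ := by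
    simp only [mulVec_sub, dotProduct_sub, sub_dotProduct, hsymm x₂ x₁]
    ring
  have hD : 0 ≤ x₁ ⬝ᵥ Q *ᵥ x₁ - 2 * (x₁ ⬝ᵥ Q *ᵥ x₂) + x₂ ⬝ᵥ Q *ᵥ x₂ := by
    rw [← hDexp]; simpa using hQ.posSemidef.dotProduct_mulVec_nonneg (x₁ - x₂)
  have hCS : (a ⬝ᵥ x₁ - a ⬝ᵥ x₂) ^ 2
      ≤ (a ⬝ᵥ Q⁻¹ *ᵥ a) *
        (x₁ ⬝ᵥ Q *ᵥ x₁ - 2 * (x₁ ⬝ᵥ Q *ᵥ x₂) + x₂ ⬝ᵥ Q *ᵥ x₂) := by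
    have := cs_aux hQ a (x₁ - x₂)
    rw [hDexp] at this
    simpa [dotProduct_sub] using this
  rw [hSbar, hQbar]
  exact scalar_key _ _ _ _ _ _ _ _ _ _ hκ0 hl hm hs hz10 hz11 hz20 hz21 hD hCS

/-- The set `T = {(x,z,t) : z ∈ [0,1], t ≥ xᵀQx + (1-z)(aᵀx)²/(1 + zκ)}`,
with `κ = aᵀQ⁻¹a` and `Q ≻ 0`, is convex. -/
theorem T_convex
    (n : ℕ) (Q : Matrix (Fin n) (Fin n) ℝ) (hQ : Q.PosDef) (a : Fin n → ℝ) :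
    Convex ℝ
      {p : (Fin n → ℝ) × ℝ × ℝ |
        p.2.1 ∈ Set.Icc (0 : ℝ) 1 ∧
          p.1 ⬝ᵥ Q.mulVec p.1 +
            (1 - p.2.1) * (a ⬝ᵥ p.1) ^ 2 / (1 + p.2.1 * (a ⬝ᵥ Q⁻¹.mulVec a)) ≤ p.2.2} := by
  rintro ⟨x₁, z₁, t₁⟩ hp ⟨x₂, z₂, t₂⟩ hq l m hl hm hs
  simp only [Set.mem_setOf_eq, Set.mem_Icc] at hp hq ⊢
  obtain ⟨⟨hz10, hz11⟩, hF1⟩ := hp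
  obtain ⟨⟨hz20, hz21⟩, hF2⟩ := hq
  simp only [Prod.smul_mk, Prod.mk_add_mk, smul_eq_mul]
  refine ⟨⟨?_, ?_⟩, ?_⟩
  · exact add_nonneg (mul_nonneg hl hz10) (mul_nonneg hm hz20)
  · nlinarith
  · calc
      (l • x₁ + m • x₂) ⬝ᵥ Q *ᵥ (l • x₁ + m • x₂) +
          (1 - (l * z₁ + m * z₂)) * (a ⬝ᵥ (l • x₁ + m • x₂)) ^ 2 /
            (1 + (l * z₁ + m * z₂) * (a ⬝ᵥ Q⁻¹ *ᵥ a))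
        ≤ l * (x₁ ⬝ᵥ Q *ᵥ x₁ + (1 - z₁) * (a ⬝ᵥ x₁) ^ 2 / (1 + z₁ * (a ⬝ᵥ Q⁻¹ *ᵥ a))) +
          m * (x₂ ⬝ᵥ Q *ᵥ x₂ + (1 - z₂) * (a ⬝ᵥ x₂) ^ 2 / (1 + z₂ * (a ⬝ᵥ Q⁻¹ *ᵥ a))) :=
          F_comb hQ a x₁ x₂ hz10 hz11 hz20 hz21 hl hm hs
      _ ≤ l * t₁ + m * t₂ :=
          add_le_add (mul_le_mul_of_nonneg_left hF1 hl) (mul_le_mul_of_nonneg_left hF2 hm)
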